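/- For every word w ∈ L_{2,∞} there exists a word w' ∈ L (possibly equal to w) of the same length such that w' is obtained from w by a finite sequence of the rewriting moves: (1) replace a factor ρμ by μρ; (2) replace a prefix w₀ρλw₁λμ (with D_{ρ,λ}(w₀)=1, w₁ ∈ L_{1,∞}) by w₀λρw₁μλ; (3) replace a prefix w₀λρw₁λμ (with D_{ρ,λ}(w₀)=1, w₁ ∈ L_{1,∞}) by w₀ρλw₁μλ. In particular the rewriting process terminates. -/
import Mathlib


inductive Letter | rho | lam | mu
deriving DecidableEq

open Letter

def Dc (a b : Letter) (u : List Letter) : ℤ :=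
  (u.count a : ℤ) - (u.count b : ℤ)

def Linf (k : ℕ) (w : List Letter) : Prop :=
  (∀ u : List Letter, u <+: w → 0 ≤ Dc rho lam u ∧ Dc rho lam u ≤ (k : ℤ) ∧ 0 ≤ Dc lam mu u) ∧
  Dc rho lam w = 0 ∧ Dc lam mu w = 0

def hasRhoMu (w : List Letter) : Prop :=
  ∃ a b : List Letter, w = a ++ [rho, mu] ++ b

def BadPrefix (w : List Letter) : Prop :=
  ∃ w₀ w₁ : List Letter, Dc rho lam w₀ = 1 ∧ Linf 1 w₁ ∧
    ((w₀ ++ [rho, lam] ++ w₁ ++ [lam, mu]) <+: w ∨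
     (w₀ ++ [lam, rho] ++ w₁ ++ [lam, mu]) <+: w)

def Lang (w : List Letter) : Prop :=
  Linf 2 w ∧ ¬ hasRhoMu w ∧ ¬ BadPrefix w

inductive Step : List Letter → List Letter → Prop
  | rhomu (a b : List Letter) :
      Step (a ++ [rho, mu] ++ b) (a ++ [mu, rho] ++ b)
  | move2 (w₀ w₁ rest : List Letter) (h₀ : Dc rho lam w₀ = 1) (h₁ : Linf 1 w₁) :
      Step (w₀ ++ [rho, lam] ++ w₁ ++ [lam, mu] ++ rest)
           (w₀ ++ [lam, rho] ++ w₁ ++ [mu, lam] ++ rest)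
  | move3 (w₀ w₁ rest : List Letter) (h₀ : Dc rho lam w₀ = 1) (h₁ : Linf 1 w₁) :
      Step (w₀ ++ [lam, rho] ++ w₁ ++ [lam, mu] ++ rest)
           (w₀ ++ [rho, lam] ++ w₁ ++ [mu, lam] ++ rest)

/-! ### Auxiliary lemmas -/

lemma prefix_cons_cases {α : Type*} {u : List α} {x : α} {l : List α} (h : u <+: x :: l) :
    u = [] ∨ ∃ t, u = x :: t ∧ t <+: l := by
  match u with
  | [] => exact Or.inl rfl
  | y :: u' =>
    rw [List.cons_prefix_cons] at h
    exact Or.inr ⟨u', by rw [h.1], h.2⟩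

lemma prefix_append_cases {α : Type*} {u a b : List α} (h : u <+: a ++ b) :
    u <+: a ∨ ∃ t, u = a ++ t ∧ t <+: b := by
  induction a generalizing u with
  | nil => exact Or.inr ⟨u, rfl, h⟩
  | cons x xs ih =>
    rcases prefix_cons_cases h with rfl | ⟨t, rfl, ht⟩
    · exact Or.inl (List.nil_prefix)
    · rcases ih ht with h' | ⟨s, rfl, hs⟩
      · exact Or.inl (List.cons_prefix_cons.mpr ⟨rfl, h'⟩)
      · exact Or.inr ⟨s, by simp, hs⟩

lemma prefix_append_of_prefix {α : Type*} {t b : List α} (a : List α) (h : t <+: b) :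
    a ++ t <+: a ++ b := by
  obtain ⟨r, rfl⟩ := h; exact ⟨r, by simp⟩

lemma Dc_perm {a b : Letter} {u v : List Letter} (h : u.Perm v) : Dc a b u = Dc a b v := by
  simp [Dc, h.count_eq]

/-- measure: binary value of the word, `mu ↦ 0`, other letters `↦ 1`, MSB first -/
def bitv : Letter → ℕ
  | mu => 0
  | _ => 1

def fm : List Letter → ℕ
  | [] => 0
  | x :: xs => bitv x * 2 ^ xs.length + fm xs

lemma fm_append (a b : List Letter) : fm (a ++ b) = fm a * 2 ^ b.length + fm b := by
  induction a with
  | nil => simp [fm]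
  | cons x xs ih =>
    rw [List.cons_append]
    show bitv x * 2 ^ (xs ++ b).length + fm (xs ++ b) = _
    rw [ih, List.length_append, pow_add]
    simp only [fm]
    ring

lemma Step.length_eq {w w' : List Letter} (h : Step w w') : w'.length = w.length := by
  cases h <;> simp

lemma Step.fm_lt {w w' : List Letter} (h : Step w w') : fm w' < fm w := by
  cases h with
  | rhomu a b =>
    have key : ∀ x y : Letter, fm (a ++ [x, y] ++ b) =
        fm a * (2 ^ b.length * 4) + bitv x * (2 ^ b.length * 2) + bitv y * 2 ^ b.length
          + fm b := by
      intro x y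
      simp only [fm_append, fm, List.length_append, List.length_cons, List.length_nil,
        pow_add, pow_succ, pow_zero]
      ring
    rw [key, key]
    have h1 : 1 ≤ 2 ^ b.length := Nat.one_le_two_pow
    simp only [bitv]
    linarith
  | move2 w₀ w₁ rest h₀ h₁ =>
    have key : ∀ x y z t : Letter, fm (w₀ ++ [x, y] ++ w₁ ++ [z, t] ++ rest) =
        fm w₀ * (2 ^ w₁.length * 2 ^ rest.length * 16)
          + bitv x * (2 ^ w₁.length * 2 ^ rest.length * 8)
          + bitv y * (2 ^ w₁.length * 2 ^ rest.length * 4)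
          + fm w₁ * (2 ^ rest.length * 4)
          + bitv z * (2 ^ rest.length * 2) + bitv t * 2 ^ rest.length + fm rest := by
      intro x y z t
      simp only [fm_append, fm, List.length_append, List.length_cons, List.length_nil,
        pow_add, pow_succ, pow_zero]
      ring
    rw [key, key]
    have h1 : 1 ≤ 2 ^ rest.length := Nat.one_le_two_pow
    simp only [bitv]
    linarith
  | move3 w₀ w₁ rest h₀ h₁ =>
    have key : ∀ x y z t : Letter, fm (w₀ ++ [x, y] ++ w₁ ++ [z, t] ++ rest) =
        fm w₀ * (2 ^ w₁.length * 2 ^ rest.length * 16)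
          + bitv x * (2 ^ w₁.length * 2 ^ rest.length * 8)
          + bitv y * (2 ^ w₁.length * 2 ^ rest.length * 4)
          + fm w₁ * (2 ^ rest.length * 4)
          + bitv z * (2 ^ rest.length * 2) + bitv t * 2 ^ rest.length + fm rest := by
      intro x y z t
      simp only [fm_append, fm, List.length_append, List.length_cons, List.length_nil,
        pow_add, pow_succ, pow_zero]
      ring
    rw [key, key]
    have h1 : 1 ≤ 2 ^ rest.length := Nat.one_le_two_pow
    simp only [bitv]
    linarith

/-- if we permute a prefix, keeping the prefix-conditions on the new prefix,
membership in `Linf k` is preserved. -/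
lemma Linf_swap {k : ℕ} {p q rest : List Letter} (hperm : p.Perm q)
    (hw : Linf k (p ++ rest))
    (hpref : ∀ u, u <+: q → 0 ≤ Dc rho lam u ∧ Dc rho lam u ≤ (k : ℤ) ∧ 0 ≤ Dc lam mu u) :
    Linf k (q ++ rest) := by
  refine ⟨?_, ?_, ?_⟩
  · intro u hu
    rcases prefix_append_cases hu with h | ⟨t, rfl, ht⟩
    · exact hpref u h
    · have hperm2 : (q ++ t).Perm (p ++ t) := hperm.symm.append_right t
      rw [Dc_perm hperm2, Dc_perm hperm2]
      exact hw.1 (p ++ t) (prefix_append_of_prefix p ht)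
  · rw [Dc_perm ((hperm.symm.append_right rest))]; exact hw.2.1
  · rw [Dc_perm ((hperm.symm.append_right rest))]; exact hw.2.2

lemma Step.linf {w w' : List Letter} (h : Step w w') (hw : Linf 2 w) : Linf 2 w' := by
  cases h with
  | rhomu a b =>
    have hw2 : Linf 2 ((a ++ [rho, mu]) ++ b) := by simpa [List.append_assoc] using hw
    have hres : Linf 2 ((a ++ [mu, rho]) ++ b) := by
      refine Linf_swap (List.Perm.append_left a (List.Perm.swap mu rho [])) hw2 ?_
      intro u hu
      have ha := hw.1 a ⟨[rho, mu] ++ b, by simp⟩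
      have haρ := hw.1 (a ++ [rho]) ⟨[mu] ++ b, by simp⟩
      have haρμ := hw.1 (a ++ [rho, mu]) ⟨b, by simp⟩
      rcases prefix_append_cases hu with h | ⟨t, rfl, ht⟩
      · exact hw.1 u (h.trans ⟨[rho, mu] ++ b, by simp⟩)
      · rcases prefix_cons_cases ht with rfl | ⟨s, rfl, hs⟩
        · simpa using ha
        · rcases prefix_cons_cases hs with rfl | ⟨r, rfl, hr⟩
          · simp only [Dc, List.count_append, List.count_cons, List.count_nil] at ha haρμ ⊢
            simp at ha haρμ ⊢
            omega
          · rw [List.prefix_nil] at hr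
            subst hr
            simp only [Dc, List.count_append, List.count_cons, List.count_nil] at ha haρ haρμ ⊢
            simp at ha haρ haρμ ⊢
            omega
    simpa [List.append_assoc] using hres
  | move2 w₀ w₁ rest h₀ h₁ =>
    have hw2 : Linf 2 ((w₀ ++ [rho, lam] ++ w₁ ++ [lam, mu]) ++ rest) := by
      simpa [List.append_assoc] using hw
    have hperm : (w₀ ++ [rho, lam] ++ w₁ ++ [lam, mu]).Perm
        (w₀ ++ [lam, rho] ++ w₁ ++ [mu, lam]) := by
      have : (w₀ ++ ([rho, lam] ++ (w₁ ++ [lam, mu]))).Perm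
          (w₀ ++ ([lam, rho] ++ (w₁ ++ [mu, lam]))) :=
        List.Perm.append_left w₀
          ((List.Perm.swap lam rho []).append
            (List.Perm.append_left w₁ (List.Perm.swap mu lam [])))
      simpa [List.append_assoc] using this
    have hres : Linf 2 ((w₀ ++ [lam, rho] ++ w₁ ++ [mu, lam]) ++ rest) := by
      refine Linf_swap hperm hw2 ?_
      intro u hu
      have hw₀ := hw.1 w₀ ⟨[rho, lam] ++ w₁ ++ [lam, mu] ++ rest, by simp⟩
      have hd1 := h₁.2.1
      have hd2 := h₁.2.2
      have hu' : u <+: w₀ ++ ([lam, rho] ++ (w₁ ++ [mu, lam])) := by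
        simpa [List.append_assoc] using hu
      rcases prefix_append_cases hu' with h | ⟨t, rfl, ht⟩
      · exact hw.1 u (h.trans ⟨[rho, lam] ++ w₁ ++ [lam, mu] ++ rest, by simp⟩)
      · rcases prefix_cons_cases ht with rfl | ⟨s, rfl, hs⟩
        · simpa using hw₀
        · rcases prefix_cons_cases hs with rfl | ⟨v, rfl, hv⟩
          · simp only [Dc, List.count_append, List.count_cons, List.count_nil] at hw₀ h₀ ⊢
            simp at hw₀ h₀ ⊢
            omega
          · have hv' : v <+: w₁ ++ [mu, lam] := by simpa using hv
            rcases prefix_append_cases (a := w₁) (b := [mu, lam]) hv' with h | ⟨r, rfl, hr⟩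
            · -- u = w₀ ++ lam :: rho :: v, v <+: w₁ : permute with a prefix of w
              have hperm2 : (w₀ ++ lam :: rho :: v).Perm (w₀ ++ rho :: lam :: v) :=
                List.Perm.append_left w₀ (List.Perm.swap rho lam v)
              rw [Dc_perm hperm2, Dc_perm hperm2]
              refine hw.1 (w₀ ++ rho :: lam :: v) ?_
              obtain ⟨r2, rfl⟩ := h
              exact ⟨r2 ++ [lam, mu] ++ rest, by simp⟩
            · -- r <+: [mu, lam]
              rcases prefix_cons_cases hr with rfl | ⟨r2, rfl, hr2⟩
              · simp only [Dc, List.count_append, List.count_cons, List.count_nil] at hw₀ h₀ hd1 hd2 ⊢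
                simp at hw₀ h₀ hd1 hd2 ⊢
                omega
              · rcases prefix_cons_cases hr2 with rfl | ⟨r3, rfl, hr3⟩
                · simp only [Dc, List.count_append, List.count_cons, List.count_nil] at hw₀ h₀ hd1 hd2 ⊢
                  simp at hw₀ h₀ hd1 hd2 ⊢
                  omega
                · rw [List.prefix_nil] at hr3
                  subst hr3
                  simp only [Dc, List.count_append, List.count_cons, List.count_nil] at hw₀ h₀ hd1 hd2 ⊢
                  simp at hw₀ h₀ hd1 hd2 ⊢
                  omega
    simpa [List.append_assoc] using hres
  | move3 w₀ w₁ rest h₀ h₁ =>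
    have hw2 : Linf 2 ((w₀ ++ [lam, rho] ++ w₁ ++ [lam, mu]) ++ rest) := by
      simpa [List.append_assoc] using hw
    have hperm : (w₀ ++ [lam, rho] ++ w₁ ++ [lam, mu]).Perm
        (w₀ ++ [rho, lam] ++ w₁ ++ [mu, lam]) := by
      have : (w₀ ++ ([lam, rho] ++ (w₁ ++ [lam, mu]))).Perm
          (w₀ ++ ([rho, lam] ++ (w₁ ++ [mu, lam]))) :=
        List.Perm.append_left w₀
          ((List.Perm.swap rho lam []).append
            (List.Perm.append_left w₁ (List.Perm.swap mu lam [])))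
      simpa [List.append_assoc] using this
    have hres : Linf 2 ((w₀ ++ [rho, lam] ++ w₁ ++ [mu, lam]) ++ rest) := by
      refine Linf_swap hperm hw2 ?_
      intro u hu
      have hw₀ := hw.1 w₀ ⟨[lam, rho] ++ w₁ ++ [lam, mu] ++ rest, by simp⟩
      have hd1 := h₁.2.1
      have hd2 := h₁.2.2
      have hu' : u <+: w₀ ++ ([rho, lam] ++ (w₁ ++ [mu, lam])) := by
        simpa [List.append_assoc] using hu
      rcases prefix_append_cases hu' with h | ⟨t, rfl, ht⟩
      · exact hw.1 u (h.trans ⟨[lam, rho] ++ w₁ ++ [lam, mu] ++ rest, by simp⟩)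
      · rcases prefix_cons_cases ht with rfl | ⟨s, rfl, hs⟩
        · simpa using hw₀
        · rcases prefix_cons_cases hs with rfl | ⟨v, rfl, hv⟩
          · simp only [Dc, List.count_append, List.count_cons, List.count_nil] at hw₀ h₀ ⊢
            simp at hw₀ h₀ ⊢
            omega
          · have hv' : v <+: w₁ ++ [mu, lam] := by simpa using hv
            rcases prefix_append_cases (a := w₁) (b := [mu, lam]) hv' with h | ⟨r, rfl, hr⟩
            · have hperm2 : (w₀ ++ rho :: lam :: v).Perm (w₀ ++ lam :: rho :: v) :=
                List.Perm.append_left w₀ (List.Perm.swap lam rho v)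
              rw [Dc_perm hperm2, Dc_perm hperm2]
              refine hw.1 (w₀ ++ lam :: rho :: v) ?_
              obtain ⟨r2, rfl⟩ := h
              exact ⟨r2 ++ [lam, mu] ++ rest, by simp⟩
            · rcases prefix_cons_cases hr with rfl | ⟨r2, rfl, hr2⟩
              · simp only [Dc, List.count_append, List.count_cons, List.count_nil] at hw₀ h₀ hd1 hd2 ⊢
                simp at hw₀ h₀ hd1 hd2 ⊢
                omega
              · rcases prefix_cons_cases hr2 with rfl | ⟨r3, rfl, hr3⟩
                · simp only [Dc, List.count_append, List.count_cons, List.count_nil] at hw₀ h₀ hd1 hd2 ⊢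
                  simp at hw₀ h₀ hd1 hd2 ⊢
                  omega
                · rw [List.prefix_nil] at hr3
                  subst hr3
                  simp only [Dc, List.count_append, List.count_cons, List.count_nil] at hw₀ h₀ hd1 hd2 ⊢
                  simp at hw₀ h₀ hd1 hd2 ⊢
                  omega
    simpa [List.append_assoc] using hres

theorem stmt14 (w : List Letter) (hw : Linf 2 w) :
    ∃ w' : List Letter, Relation.ReflTransGen Step w w' ∧ Lang w' ∧
      w'.length = w.length := by
  have H : ∀ n (w : List Letter), fm w < n → Linf 2 w →
      ∃ w' : List Letter, Relation.ReflTransGen Step w w' ∧ Lang w' ∧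
        w'.length = w.length := by
    intro n
    induction n with
    | zero => intro w h _; omega
    | succ n ih =>
      intro w hfm hw
      by_cases hL : Lang w
      · exact ⟨w, Relation.ReflTransGen.refl, hL, rfl⟩
      · have hbad : hasRhoMu w ∨ BadPrefix w := by
          by_contra hc
          push_neg at hc
          exact hL ⟨hw, hc.1, hc.2⟩
        obtain ⟨v, hstep⟩ : ∃ v, Step w v := by
          rcases hbad with ⟨a, b, rfl⟩ | ⟨w₀, w₁, h₀, h₁, hpre | hpre⟩
          · exact ⟨_, Step.rhomu a b⟩
          · obtain ⟨rest, rfl⟩ := hpre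
            have e : (w₀ ++ [rho, lam] ++ w₁ ++ [lam, mu]) ++ rest =
                w₀ ++ [rho, lam] ++ w₁ ++ [lam, mu] ++ rest := by simp [List.append_assoc]
            exact ⟨_, by rw [e]; exact Step.move2 w₀ w₁ rest h₀ h₁⟩
          · obtain ⟨rest, rfl⟩ := hpre
            have e : (w₀ ++ [lam, rho] ++ w₁ ++ [lam, mu]) ++ rest =
                w₀ ++ [lam, rho] ++ w₁ ++ [lam, mu] ++ rest := by simp [List.append_assoc]
            exact ⟨_, by rw [e]; exact Step.move3 w₀ w₁ rest h₀ h₁⟩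
        have hw' : Linf 2 v := hstep.linf hw
        have hlt : fm v < fm w := hstep.fm_lt
        obtain ⟨w'', hrt, hLang, hlen⟩ := ih v (by omega) hw'
        exact ⟨w'', Relation.ReflTransGen.head hstep hrt, hLang,
          by rw [hlen, hstep.length_eq]⟩
  exact H (fm w + 1) w (by omega) hw
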